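/- Lighthill boundary conditions for the vorticity: if (u₁^ε, u₂^ε) is a C² solution (up to the boundary) of the viscous plane-parallel system with u₁^ε(z) = 0 and u₂^ε(x,z) = 0 at z = 0 and z = 1 for all x, then the vorticity components ω₁^ε = −∂_z u₂^ε, ω₂^ε = d_z u₁^ε, ω₃^ε = ∂_x u₂^ε satisfy, at z = 0 and z = 1: ε ∂_z ω₁^ε = f₂, ε d_z ω₂^ε = −f₁, and ω₃^ε = 0. -/
import Mathlib


/-- Partial derivative in `x` of a function of two variables. -/
noncomputable def pdx (g : ℝ → ℝ → ℝ) (x z : ℝ) : ℝ := deriv (fun x' => g x' z) x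

/-- Partial derivative in `z` of a function of two variables. -/
noncomputable def pdz (g : ℝ → ℝ → ℝ) (x z : ℝ) : ℝ := deriv (fun z' => g x z') z

/-- Lighthill boundary conditions for the vorticity: for a `C²` (up to the
boundary) solution of the viscous plane-parallel system with `u₁ = u₂ = 0` at `z = 0, 1`,
the vorticity `ω = (−∂_z u₂, d_z u₁, ∂_x u₂)` satisfies, at `z = 0` and `z = 1`,
`ε ∂_z ω₁ = f₂`, `ε d_z ω₂ = −f₁`, and `ω₃ = 0`. -/
theorem statement6 (L ε : ℝ) (hL : 0 < L) (hε : 0 < ε)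
    (f₁ : ℝ → ℝ) (f₂ : ℝ → ℝ → ℝ)
    (hf₁ : Continuous f₁)
    (hf₂ : Continuous (fun p : ℝ × ℝ => f₂ p.1 p.2))
    (hf₂per : ∀ x z : ℝ, f₂ (x + L) z = f₂ x z)
    (u₁ : ℝ → ℝ) (u₂ : ℝ → ℝ → ℝ)
    (hu₁ : ContDiff ℝ 2 u₁)
    (hu₂ : ContDiff ℝ 2 (fun p : ℝ × ℝ => u₂ p.1 p.2))
    (heq₁ : ∀ z ∈ Set.Icc (0:ℝ) 1, u₁ z - ε * deriv (deriv u₁) z = f₁ z)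
    (heq₂ : ∀ x : ℝ, ∀ z ∈ Set.Icc (0:ℝ) 1,
      u₂ x z - ε * (pdx (pdx u₂) x z + pdz (pdz u₂) x z)
        + u₁ z * pdx u₂ x z = f₂ x z)
    (hper : ∀ x z : ℝ, u₂ (x + L) z = u₂ x z)
    (hb₁0 : u₁ 0 = 0) (hb₁1 : u₁ 1 = 0)
    (hb₂0 : ∀ x : ℝ, u₂ x 0 = 0) (hb₂1 : ∀ x : ℝ, u₂ x 1 = 0) :
    -- ε ∂_z ω₁ = f₂ at z = 0, 1, where ω₁ = −∂_z u₂
    (∀ x : ℝ, ε * pdz (fun x' z' => -(pdz u₂ x' z')) x 0 = f₂ x 0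
      ∧ ε * pdz (fun x' z' => -(pdz u₂ x' z')) x 1 = f₂ x 1)
    -- ε d_z ω₂ = −f₁ at z = 0, 1, where ω₂ = d_z u₁
    ∧ (ε * deriv (deriv u₁) 0 = -f₁ 0 ∧ ε * deriv (deriv u₁) 1 = -f₁ 1)
    -- ω₃ = 0 at z = 0, 1, where ω₃ = ∂_x u₂
    ∧ (∀ x : ℝ, pdx u₂ x 0 = 0 ∧ pdx u₂ x 1 = 0) := by
  have hx0 : ∀ x : ℝ, pdx u₂ x 0 = 0 := by
    intro x
    have h : (fun x' => u₂ x' 0) = fun _ => (0:ℝ) := funext hb₂0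
    simp [pdx, h]
  have hx1 : ∀ x : ℝ, pdx u₂ x 1 = 0 := by
    intro x
    have h : (fun x' => u₂ x' 1) = fun _ => (0:ℝ) := funext hb₂1
    simp [pdx, h]
  have hxx0 : ∀ x : ℝ, pdx (pdx u₂) x 0 = 0 := by
    intro x
    have h : (fun x' => pdx u₂ x' 0) = fun _ => (0:ℝ) := funext hx0
    simp only [pdx] at h ⊢
    rw [h]; simp
  have hxx1 : ∀ x : ℝ, pdx (pdx u₂) x 1 = 0 := by
    intro x
    have h : (fun x' => pdx u₂ x' 1) = fun _ => (0:ℝ) := funext hx1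
    simp only [pdx] at h ⊢
    rw [h]; simp
  refine ⟨?_, ⟨?_, ?_⟩, fun x => ⟨hx0 x, hx1 x⟩⟩
  · intro x
    have h0 := heq₂ x 0 (by norm_num)
    have h1 := heq₂ x 1 (by norm_num)
    rw [hb₂0 x, hxx0 x, hb₁0, hx0 x] at h0
    rw [hb₂1 x, hxx1 x, hb₁1, hx1 x] at h1
    have hn0 : pdz (fun x' z' => -(pdz u₂ x' z')) x 0 = -(pdz (pdz u₂) x 0) := by
      simp [pdz]
    have hn1 : pdz (fun x' z' => -(pdz u₂ x' z')) x 1 = -(pdz (pdz u₂) x 1) := by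
      simp [pdz]
    rw [hn0, hn1]
    constructor <;> nlinarith [h0, h1]
  · have h := heq₁ 0 (by norm_num)
    rw [hb₁0] at h
    linarith
  · have h := heq₁ 1 (by norm_num)
    rw [hb₁1] at h
    linarith
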